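/- For every integer k ≥ 3, the maximum value of a feasible half-integer multiflow on the instance (G_k, H_k) with all supply edge capacities equal to 1 is exactly k/2. -/

import Mathlib

open scoped Classical

/-- `H` is a minor of `G`: there are disjoint nonempty connected branch sets in `G`,
one for each vertex of `H`, with an edge of `G` between the branch sets of any two
vertices adjacent in `H`. -/
def SimpleGraph.HasMinor {V : Type*} {W : Type*} (G : SimpleGraph V) (H : SimpleGraph W) : Prop :=
  ∃ φ : W → Set V,
    (∀ w, (φ w).Nonempty) ∧
    (∀ w, (G.induce (φ w)).Connected) ∧
    (∀ w₁ w₂, w₁ ≠ w₂ → Disjoint (φ w₁) (φ w₂)) ∧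
    (∀ w₁ w₂, H.Adj w₁ w₂ → ∃ v₁ ∈ φ w₁, ∃ v₂ ∈ φ w₂, G.Adj v₁ v₂)

/-- Planarity, via Wagner's characterisation: a graph is planar iff it has
neither a `K₅` nor a `K₃,₃` minor. -/
def SimpleGraph.IsPlanar {V : Type*} (G : SimpleGraph V) : Prop :=
  ¬ G.HasMinor (⊤ : SimpleGraph (Fin 5)) ∧
    ¬ G.HasMinor (completeBipartiteGraph (Fin 3) (Fin 3))

/-- A flow path for the instance `(G, H)`: a path in the supply graph `G` joining the
two endpoints of a demand edge of `H`. -/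
structure FlowPath {V : Type*} (G H : SimpleGraph V) where
  src : V
  dst : V
  demand : H.Adj src dst
  walk : G.Walk src dst
  isPath : walk.IsPath

/-- The set of (supply) edges used by a flow path. -/
def FlowPath.edges {V : Type*} {G H : SimpleGraph V} (P : FlowPath G H) : Set (Sym2 V) :=
  {e | e ∈ P.walk.edges}

/-- The demand edge of a flow path. -/
def FlowPath.demandEdge {V : Type*} {G H : SimpleGraph V} (P : FlowPath G H) : Sym2 V :=
  s(P.src, P.dst)

/-- A multiflow `f` is feasible for capacities `c` if it is nonnegative and the total
flow through any supply edge is at most its capacity. -/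
def MultiflowFeasible {V : Type*} (G H : SimpleGraph V) (c : Sym2 V → ℝ)
    (f : FlowPath G H → ℝ) : Prop :=
  (∀ P, 0 ≤ f P) ∧
    ∀ e ∈ G.edgeSet, (∑ᶠ P ∈ {P : FlowPath G H | e ∈ P.edges}, f P) ≤ c e

/-- The value of a multiflow: the total flow on all paths. -/
noncomputable def multiflowValue {V : Type*} {G H : SimpleGraph V}
    (f : FlowPath G H → ℝ) : ℝ :=
  ∑ᶠ P : FlowPath G H, f P

/-- An integer multiflow. -/
def IsIntegerFlow {V : Type*} {G H : SimpleGraph V} (f : FlowPath G H → ℝ) : Prop :=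
  ∀ P, ∃ n : ℤ, f P = n

/-- A half-integer multiflow: every value is an integer multiple of `1/2`. -/
def IsHalfIntegerFlow {V : Type*} {G H : SimpleGraph V} (f : FlowPath G H → ℝ) : Prop :=
  ∀ P, ∃ n : ℤ, f P = n / 2

/-- A multicut: a set of supply edges meeting every path of `𝒫`. -/
def IsMulticut {V : Type*} (G H : SimpleGraph V) (M : Set (Sym2 V)) : Prop :=
  M ⊆ G.edgeSet ∧ ∀ P : FlowPath G H, ∃ e ∈ M, e ∈ P.edges

/-- The capacity of a set of edges. -/
noncomputable def edgeSetCapacity {V : Type*} (c : Sym2 V → ℝ) (M : Set (Sym2 V)) : ℝ :=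
  ∑ᶠ e ∈ M, c e

/-- The set of edges of `E` having exactly one endpoint in `S`. -/
def cutEdges {V : Type*} (E : Set (Sym2 V)) (S : Set V) : Set (Sym2 V) :=
  {e | e ∈ E ∧ ∃ u v, e = s(u, v) ∧ ((u ∈ S ∧ v ∉ S) ∨ (v ∈ S ∧ u ∉ S))}

/-- `S` is the edge set of a circuit of `D` (a connected subgraph with all degrees two). -/
def IsCircuitEdgeSet {W : Type*} (D : SimpleGraph W) (S : Set (Sym2 W)) : Prop :=
  ∃ (w : W) (C : D.Walk w w), C.IsCycle ∧ S = {e | e ∈ C.edges}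

/-- `C` is a cut of the graph `G`. -/
def IsGraphCut {V : Type*} (G : SimpleGraph V) (C : Set (Sym2 V)) : Prop :=
  ∃ S : Set V, C = cutEdges G.edgeSet S

/-- `C` is an inclusionwise minimal nonempty cut of `G`. -/
def IsMinimalCut {V : Type*} (G : SimpleGraph V) (C : Set (Sym2 V)) : Prop :=
  C.Nonempty ∧ IsGraphCut G C ∧
    ∀ C', C'.Nonempty → IsGraphCut G C' → C' ⊆ C → C' = C

/-- `Q` is a 2-connector for the demand edges `F'` within the supply edges `E'`:
every demand edge lies on a circuit of `Q ∪ F'`. -/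
def Is2Connector {W : Type*} (E' F' Q : Set (Sym2 W)) : Prop :=
  Q ⊆ E' ∧ ∀ e ∈ F',
    ∃ S, IsCircuitEdgeSet (SimpleGraph.fromEdgeSet (Q ∪ F')) S ∧ e ∈ S

/-- `D` together with the edge correspondence `star` is a planar dual of `G'`
(Whitney's characterisation): `star` is a bijection between the edges of `G'` and
those of `D` under which inclusionwise minimal cuts correspond to circuits and
circuits correspond to inclusionwise minimal cuts. -/
def IsPlanarDual {V W : Type*} (G' : SimpleGraph V) (D : SimpleGraph W)
    (star : Sym2 V → Sym2 W) : Prop :=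
  Set.InjOn star G'.edgeSet ∧ star '' G'.edgeSet = D.edgeSet ∧
    (∀ C ⊆ G'.edgeSet, (IsMinimalCut G' C ↔ IsCircuitEdgeSet D (star '' C))) ∧
    (∀ C ⊆ G'.edgeSet, (IsCircuitEdgeSet G' C ↔ IsMinimalCut D (star '' C)))

/-- A laminar family: any two members are disjoint or one contains the other. -/
def IsLaminar {α : Type*} (𝓛 : Set (Set α)) : Prop :=
  ∀ A ∈ 𝓛, ∀ B ∈ 𝓛, A ⊆ B ∨ B ⊆ A ∨ Disjoint A B

/-- The supply graph `G_k`: vertices `a_i = Sum.inl i`, `b_i = Sum.inr i` (`i : Fin k`,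
0-indexed), with edges `a_i b_i` and `a_i a_{i+1}`, all of capacity `1`. -/
def Gk (k : ℕ) : SimpleGraph (Fin k ⊕ Fin k) :=
  SimpleGraph.fromEdgeSet
    ({e | ∃ i : Fin k, e = s(Sum.inl i, Sum.inr i)} ∪
      {e | ∃ i j : Fin k, (j : ℕ) = (i : ℕ) + 1 ∧ e = s(Sum.inl i, Sum.inl j)})

/-- The demand graph `H_k`: edges `b_i b_{i+1}` and `b_i a_{i+2}`. -/
def Hk (k : ℕ) : SimpleGraph (Fin k ⊕ Fin k) :=
  SimpleGraph.fromEdgeSet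
    ({e | ∃ i j : Fin k, (j : ℕ) = (i : ℕ) + 1 ∧ e = s(Sum.inr i, Sum.inr j)} ∪
      {e | ∃ i j : Fin k, (j : ℕ) = (i : ℕ) + 2 ∧ e = s(Sum.inr i, Sum.inl j)})

/-- For every `k ≥ 3` the maximum value of a feasible half-integer
multiflow on `(G_k, H_k)` with unit capacities is exactly `k/2`. -/
instance {V : Type*} [Finite V] (G H : SimpleGraph V) : Finite (FlowPath G H) := by
  cases nonempty_fintype V
  classical
  apply Finite.of_injective
    (fun P : FlowPath G H =>
      (⟨(P.src, P.dst), ⟨P.walk, P.isPath.length_lt⟩⟩ :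
        Σ p : V × V, {w : G.Walk p.1 p.2 // w.length < Fintype.card V}))
  intro P Q h
  obtain ⟨h1, h2⟩ := Sigma.mk.inj_iff.mp h
  cases P; cases Q
  simp only [Prod.mk.injEq] at h1
  obtain ⟨hs, hd⟩ := h1
  subst hs; subst hd
  simp only [heq_eq_eq, Subtype.mk.injEq] at h2
  subst h2
  rfl

noncomputable instance {V : Type*} [Finite V] (G H : SimpleGraph V) : Fintype (FlowPath G H) :=
  Fintype.ofFinite _



namespace St17
open Fin.NatCast
variable {k : ℕ}

def A [NeZero k] (i : ℕ) : Fin k ⊕ Fin k := Sum.inl (i : Fin k)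
def B [NeZero k] (i : ℕ) : Fin k ⊕ Fin k := Sum.inr (i : Fin k)

variable [NeZero k]

lemma A_eq_A {i j : ℕ} (hi : i < k) (hj : j < k) : (A i : Fin k ⊕ Fin k) = A j ↔ i = j := by
  simp only [A, Sum.inl.injEq, Fin.ext_iff, Fin.val_cast_of_lt hi, Fin.val_cast_of_lt hj]

lemma B_eq_B {i j : ℕ} (hi : i < k) (hj : j < k) : (B i : Fin k ⊕ Fin k) = B j ↔ i = j := by
  simp only [B, Sum.inr.injEq, Fin.ext_iff, Fin.val_cast_of_lt hi, Fin.val_cast_of_lt hj]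

@[simp] lemma A_ne_B (i j : ℕ) : (A i : Fin k ⊕ Fin k) ≠ B j := by simp [A, B]
@[simp] lemma B_ne_A (i j : ℕ) : (B i : Fin k ⊕ Fin k) ≠ A j := by simp [A, B]

lemma gk_adj_ab (i : ℕ) (hi : i < k) : (Gk k).Adj (A i) (B i) := by
  rw [Gk, SimpleGraph.fromEdgeSet_adj]
  exact ⟨Or.inl ⟨(i : Fin k), rfl⟩, by simp [A, B]⟩

lemma gk_adj_aa (i : ℕ) (hi : i + 1 < k) : (Gk k).Adj (A i) (A (i+1)) := by
  rw [Gk, SimpleGraph.fromEdgeSet_adj]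
  refine ⟨Or.inr ⟨(i : Fin k), ((i+1 : ℕ) : Fin k), ?_, rfl⟩, ?_⟩
  · rw [Fin.val_cast_of_lt hi, Fin.val_cast_of_lt (by omega)]
  · rw [Ne, A_eq_A (by omega) hi]; omega

lemma hk_adj_bb (i : ℕ) (hi : i + 1 < k) : (Hk k).Adj (B i) (B (i+1)) := by
  rw [Hk, SimpleGraph.fromEdgeSet_adj]
  refine ⟨Or.inl ⟨(i : Fin k), ((i+1 : ℕ) : Fin k), ?_, rfl⟩, ?_⟩
  · rw [Fin.val_cast_of_lt hi, Fin.val_cast_of_lt (by omega)]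
  · rw [Ne, B_eq_B (by omega) hi]; omega

lemma hk_adj_ba (i : ℕ) (hi : i + 2 < k) : (Hk k).Adj (B i) (A (i+2)) := by
  rw [Hk, SimpleGraph.fromEdgeSet_adj]
  refine ⟨Or.inr ⟨(i : Fin k), ((i+2 : ℕ) : Fin k), ?_, rfl⟩, by simp [A, B]⟩
  rw [Fin.val_cast_of_lt hi, Fin.val_cast_of_lt (by omega)]

lemma gk_adj_elim {u v : Fin k ⊕ Fin k} (h : (Gk k).Adj u v) :
    (∃ i : Fin k, s(u, v) = s(Sum.inl i, Sum.inr i)) ∨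
      (∃ i j : Fin k, (j : ℕ) = (i : ℕ) + 1 ∧ s(u, v) = s(Sum.inl i, Sum.inl j)) := by
  rw [Gk, SimpleGraph.fromEdgeSet_adj] at h
  exact h.1

lemma hk_adj_elim {u v : Fin k ⊕ Fin k} (h : (Hk k).Adj u v) :
    (∃ i j : Fin k, (j : ℕ) = (i : ℕ) + 1 ∧ s(u, v) = s(Sum.inr i, Sum.inr j)) ∨
      (∃ i j : Fin k, (j : ℕ) = (i : ℕ) + 2 ∧ s(u, v) = s(Sum.inr i, Sum.inl j)) := by
  rw [Hk, SimpleGraph.fromEdgeSet_adj] at h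
  exact h.1

/-- index of a vertex -/
def idx : Fin k ⊕ Fin k → ℕ := Sum.elim Fin.val Fin.val

@[simp] lemma idx_A {i : ℕ} (hi : i < k) : idx (A i : Fin k ⊕ Fin k) = i := by
  simp [idx, A, Fin.val_cast_of_lt hi]
@[simp] lemma idx_B {i : ℕ} (hi : i < k) : idx (B i : Fin k ⊕ Fin k) = i := by
  simp [idx, B, Fin.val_cast_of_lt hi]

/-- every walk leaving `b_m` uses the pendant edge -/
lemma pendant_mem {u v : Fin k ⊕ Fin k} (p : (Gk k).Walk u v) {m : ℕ} (hm : m < k)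
    (hu : u = B m) (hv : v ≠ B m) : s(A m, B m) ∈ p.edges := by
  obtain ⟨d, hd, h1, h2⟩ := p.exists_boundary_dart {(B m : Fin k ⊕ Fin k)} (by simp [hu]) (by simp [hv])
  have hfst : d.fst = B m := h1
  have hedge : d.edge = s(d.fst, d.snd) := SimpleGraph.dart_edge_eq_mk'_iff'.mpr (Or.inl ⟨rfl, rfl⟩)
  have hmem : d.edge ∈ p.edges := List.mem_map_of_mem hd
  rcases gk_adj_elim d.adj with ⟨i, hi⟩ | ⟨i, j, hij, hij2⟩
  · rw [Sym2.eq_iff] at hi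
    rcases hi with ⟨ha, hb⟩ | ⟨ha, hb⟩
    · rw [hfst] at ha; exact absurd ha.symm (by simp [B])
    · rw [hfst] at ha
      have hieq : i = (m : Fin k) := by simpa [B] using ha.symm
      have : d.edge = s(A m, B m) := by
        rw [hedge, hfst, hb, hieq, Sym2.eq_iff]
        right; exact ⟨rfl, rfl⟩
      rwa [this] at hmem
  · exfalso
    rw [Sym2.eq_iff] at hij2
    rcases hij2 with ⟨ha, _⟩ | ⟨ha, _⟩ <;> rw [hfst] at ha <;>
      exact absurd ha.symm (by simp [B])

/-- every walk crossing from index ≤ j to index > j uses spine edge j -/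
lemma spine_mem {u v : Fin k ⊕ Fin k} (p : (Gk k).Walk u v) {j : ℕ} (hj : j + 1 < k)
    (hu : idx u ≤ j) (hv : j < idx v) : s(A j, A (j+1)) ∈ p.edges := by
  obtain ⟨d, hd, h1, h2⟩ := p.exists_boundary_dart {w : Fin k ⊕ Fin k | idx w ≤ j} hu (by simp only [Set.mem_setOf_eq]; omega)
  have hedge : d.edge = s(d.fst, d.snd) := SimpleGraph.dart_edge_eq_mk'_iff'.mpr (Or.inl ⟨rfl, rfl⟩)
  have hmem : d.edge ∈ p.edges := List.mem_map_of_mem hd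
  have h1' : idx d.fst ≤ j := h1
  have h2' : j < idx d.snd := by simpa using h2
  rcases gk_adj_elim d.adj with ⟨i, hi⟩ | ⟨i, m, him, hi⟩
  · exfalso
    rw [Sym2.eq_iff] at hi
    rcases hi with ⟨ha, hb⟩ | ⟨ha, hb⟩ <;>
      · rw [ha] at h1'; rw [hb] at h2'; simp [idx] at h1' h2'; omega
  · rw [Sym2.eq_iff] at hi
    rcases hi with ⟨ha, hb⟩ | ⟨ha, hb⟩
    · rw [ha] at h1'; rw [hb] at h2'
      simp only [idx, Sum.elim_inl] at h1' h2'
      have hieq : (i : ℕ) = j := by omega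
      have : d.edge = s(A j, A (j+1)) := by
        rw [hedge, ha, hb, Sym2.eq_iff]
        left
        constructor
        · simp only [A, Sum.inl.injEq, Fin.ext_iff, hieq, Fin.val_cast_of_lt (show j < k by omega)]
        · simp only [A, Sum.inl.injEq, Fin.ext_iff, him, hieq, Fin.val_cast_of_lt hj]
      rwa [this] at hmem
    · exfalso
      rw [ha] at h1'; rw [hb] at h2'
      simp only [idx, Sum.elim_inl] at h1' h2'
      omega

/-- symmetric version, either orientation -/
lemma spine_mem' {u v : Fin k ⊕ Fin k} (p : (Gk k).Walk u v) {j : ℕ} (hj : j + 1 < k)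
    (h : (idx u ≤ j ∧ j < idx v) ∨ (idx v ≤ j ∧ j < idx u)) :
    s(A j, A (j+1)) ∈ p.edges := by
  rcases h with ⟨h1, h2⟩ | ⟨h1, h2⟩
  · exact spine_mem p hj h1 h2
  · have := spine_mem p.reverse hj h1 h2
    rwa [SimpleGraph.Walk.edges_reverse, List.mem_reverse] at this

lemma pendant_mem' {u v : Fin k ⊕ Fin k} (p : (Gk k).Walk u v) {m : ℕ} (hm : m < k)
    (huv : u ≠ v) (h : u = B m ∨ v = B m) : s(A m, B m) ∈ p.edges := by
  rcases h with h | h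
  · exact pendant_mem p hm h (by rw [h] at huv; exact fun hc => huv hc.symm)
  · have := pendant_mem p.reverse hm h (by rw [h] at huv; exact huv)
    rwa [SimpleGraph.Walk.edges_reverse, List.mem_reverse] at this

def bbE (i : ℕ) : Sym2 (Fin k ⊕ Fin k) := s(B i, B (i+1))
def baE (i : ℕ) : Sym2 (Fin k ⊕ Fin k) := s(B i, A (i+2))

noncomputable def dec : Sym2 (Fin k ⊕ Fin k) → ℕ :=
  Sym2.lift ⟨fun u v => min (idx u) (idx v), fun u v => min_comm _ _⟩

lemma dec_bbE {i : ℕ} (hi : i + 1 < k) : dec (bbE i : Sym2 (Fin k ⊕ Fin k)) = i := by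
  simp only [bbE, dec, Sym2.lift_mk, idx_B (show i < k by omega), idx_B hi]
  omega

lemma dec_baE {i : ℕ} (hi : i + 2 < k) : dec (baE i : Sym2 (Fin k ⊕ Fin k)) = i := by
  simp only [baE, dec, Sym2.lift_mk, idx_B (show i < k by omega), idx_A hi]
  omega

lemma demand_cases (P : FlowPath (Gk k) (Hk k)) :
    (∃ i, i + 1 < k ∧ P.demandEdge = bbE i) ∨ (∃ i, i + 2 < k ∧ P.demandEdge = baE i) := by
  rcases hk_adj_elim P.demand with ⟨i, j, hij, heq⟩ | ⟨i, j, hij, heq⟩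
  · left
    refine ⟨(i : ℕ), by omega, ?_⟩
    rw [FlowPath.demandEdge, heq, bbE, Sym2.eq_iff]
    left
    constructor <;> simp only [B, Sum.inr.injEq]
    · exact (Fin.cast_val_eq_self i).symm
    · rw [Fin.ext_iff, Fin.val_cast_of_lt (show (i:ℕ)+1 < k by omega)]; omega
  · right
    refine ⟨(i : ℕ), by omega, ?_⟩
    rw [FlowPath.demandEdge, heq, baE, Sym2.eq_iff]
    left
    constructor
    · simp only [B, Sum.inr.injEq]; exact (Fin.cast_val_eq_self i).symm
    · simp only [A, Sum.inl.injEq]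
      rw [Fin.ext_iff, Fin.val_cast_of_lt (show (i:ℕ)+2 < k by omega)]; omega

lemma mem_of_bbE {P : FlowPath (Gk k) (Hk k)} {i : ℕ} (hi : i + 1 < k)
    (h : P.demandEdge = bbE i) :
    s(A i, B i) ∈ P.walk.edges ∧ s(A (i+1), B (i+1)) ∈ P.walk.edges ∧
      s(A i, A (i+1)) ∈ P.walk.edges := by
  rw [FlowPath.demandEdge, bbE, Sym2.eq_iff] at h
  have hne : P.src ≠ P.dst := P.demand.ne
  rcases h with ⟨h1, h2⟩ | ⟨h1, h2⟩
  · refine ⟨pendant_mem' P.walk (by omega) hne (Or.inl h1),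
      pendant_mem' P.walk hi hne (Or.inr h2),
      spine_mem' P.walk hi (Or.inl ⟨by rw [h1, idx_B (by omega)], by rw [h2, idx_B hi]; omega⟩)⟩
  · refine ⟨pendant_mem' P.walk (by omega) hne (Or.inr h2),
      pendant_mem' P.walk hi hne (Or.inl h1),
      spine_mem' P.walk hi (Or.inr ⟨by rw [h2, idx_B (by omega)], by rw [h1, idx_B hi]; omega⟩)⟩

lemma mem_of_baE {P : FlowPath (Gk k) (Hk k)} {i : ℕ} (hi : i + 2 < k)
    (h : P.demandEdge = baE i) :
    s(A i, B i) ∈ P.walk.edges ∧ s(A i, A (i+1)) ∈ P.walk.edges ∧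
      s(A (i+1), A (i+2)) ∈ P.walk.edges := by
  rw [FlowPath.demandEdge, baE, Sym2.eq_iff] at h
  have hne : P.src ≠ P.dst := P.demand.ne
  rcases h with ⟨h1, h2⟩ | ⟨h1, h2⟩
  · refine ⟨pendant_mem' P.walk (by omega) hne (Or.inl h1),
      spine_mem' P.walk (by omega)
        (Or.inl ⟨by rw [h1, idx_B (by omega)], by rw [h2, idx_A hi]; omega⟩),
      spine_mem' P.walk hi
        (Or.inl ⟨by rw [h1, idx_B (by omega)]; omega, by rw [h2, idx_A hi]; omega⟩)⟩
  · refine ⟨pendant_mem' P.walk (by omega) hne (Or.inr h2),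
      spine_mem' P.walk (by omega)
        (Or.inr ⟨by rw [h2, idx_B (by omega)], by rw [h1, idx_A hi]; omega⟩),
      spine_mem' P.walk hi
        (Or.inr ⟨by rw [h2, idx_B (by omega)]; omega, by rw [h1, idx_A hi]; omega⟩)⟩

/-! ### arithmetic lemma -/

lemma arith (t : ℕ → ℝ) (hh : ∀ i, t i = 0 ∨ t i = 1/2 ∨ t i = 1)
    (himp : ∀ i, t (i+1) = 1 → t i = 0) :
    ∀ m : ℕ, (∑ i ∈ Finset.range (m+1), t i) ≤ ((m : ℝ) + 2)/2 ∧
      (∑ i ∈ Finset.range (m+1), t i) ≤ ((m : ℝ) + 1)/2 + t m := by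
  intro m
  induction m with
  | zero =>
    constructor <;>
      · rcases hh 0 with h | h | h <;> simp [Finset.sum_range_one, h] <;> norm_num
  | succ m ih =>
    rw [Finset.sum_range_succ]
    push_cast
    rcases hh (m+1) with h | h | h
    · constructor <;> rw [h] <;> [skip; skip] <;> nlinarith [ih.1, ih.2]
    · constructor <;> rw [h] <;> nlinarith [ih.1, ih.2]
    · have h0 := himp m h
      rw [h]
      have := ih.2
      rw [h0, add_zero] at this
      constructor <;> nlinarith [this]

/-! ### Sym2 edge identities -/

lemma AB_eq_AB {m i : ℕ} (hm : m < k) (hi : i < k) :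
    (s(A m, B m) : Sym2 (Fin k ⊕ Fin k)) = s(A i, B i) ↔ m = i := by
  rw [Sym2.eq_iff]
  constructor
  · rintro (⟨h1, _⟩ | ⟨h1, _⟩)
    · exact (A_eq_A hm hi).mp h1
    · exact absurd h1 (A_ne_B m i)
  · rintro rfl; left; exact ⟨rfl, rfl⟩

lemma AB_ne_AA {m i j : ℕ} : (s(A m, B m) : Sym2 (Fin k ⊕ Fin k)) ≠ s(A i, A j) := by
  rw [Ne, Sym2.eq_iff]
  rintro (⟨_, h2⟩ | ⟨_, h2⟩) <;> exact (B_ne_A m _) h2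

lemma AA_eq_AA {m i : ℕ} (hm : m + 1 < k) (hi : i + 1 < k) :
    (s(A m, A (m+1)) : Sym2 (Fin k ⊕ Fin k)) = s(A i, A (i+1)) ↔ m = i := by
  rw [Sym2.eq_iff]
  constructor
  · rintro (⟨h1, _⟩ | ⟨h1, h2⟩)
    · exact (A_eq_A (by omega) (by omega)).mp h1
    · rw [A_eq_A (by omega) hi] at h1
      rw [A_eq_A hm (by omega)] at h2
      omega
  · rintro rfl; left; exact ⟨rfl, rfl⟩

/-! ### the explicit flow paths -/

def wBB (i : ℕ) (h : i + 1 < k) : (Gk k).Walk (B i) (B (i+1)) :=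
  .cons (gk_adj_ab i (by omega)).symm (.cons (gk_adj_aa i h) (.cons (gk_adj_ab (i+1) h) .nil))

lemma wBB_edges (i : ℕ) (h : i + 1 < k) :
    (wBB i h).edges = [s(B i, A i), s(A i, A (i+1)), s(A (i+1), B (i+1))] := rfl

lemma wBB_isPath (i : ℕ) (h : i + 1 < k) : (wBB i h).IsPath := by
  rw [SimpleGraph.Walk.isPath_def]
  show List.Nodup [B i, A i, A (i+1), B (i+1)]
  simp only [List.nodup_cons, List.mem_cons, List.not_mem_nil, or_false,
    List.nodup_nil, and_true]
  refine ⟨?_, ?_, ?_⟩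
  · rintro (hc | hc | hc)
    · exact B_ne_A i i hc
    · exact B_ne_A i (i+1) hc
    · rw [B_eq_B (by omega) h] at hc; omega
  · rintro (hc | hc)
    · rw [A_eq_A (by omega) h] at hc; omega
    · exact A_ne_B i (i+1) hc
  · exact ⟨A_ne_B (i+1) (i+1), not_false⟩

def PBB (i : ℕ) (h : i + 1 < k) : FlowPath (Gk k) (Hk k) :=
  ⟨B i, B (i+1), hk_adj_bb i h, wBB i h, wBB_isPath i h⟩

def wQ (h : 2 < k) : (Gk k).Walk (B 0) (A 2) :=
  .cons (gk_adj_ab 0 (by omega)).symm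
    (.cons (gk_adj_aa 0 (by omega)) (.cons (gk_adj_aa 1 h) .nil))

lemma wQ_edges (h : 2 < k) :
    (wQ h).edges = [s(B 0, A 0), s(A 0, A 1), s(A 1, A 2)] := rfl

lemma wQ_isPath (h : 2 < k) : (wQ h).IsPath := by
  rw [SimpleGraph.Walk.isPath_def]
  show List.Nodup [B 0, A 0, A 1, A 2]
  simp only [List.nodup_cons, List.mem_cons, List.not_mem_nil, or_false,
    List.nodup_nil, and_true]
  refine ⟨?_, ?_, ?_⟩
  · rintro (hc | hc | hc)
    · exact B_ne_A 0 0 hc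
    · exact B_ne_A 0 1 hc
    · exact B_ne_A 0 2 hc
  · rintro (hc | hc)
    · rw [A_eq_A (by omega) (by omega)] at hc; omega
    · rw [A_eq_A (by omega) h] at hc; omega
  · refine ⟨fun hc => ?_, not_false⟩
    rw [A_eq_A (by omega) h] at hc; omega

def PQ (h : 2 < k) : FlowPath (Gk k) (Hk k) :=
  ⟨B 0, A 2, hk_adj_ba 0 (by omega), wQ h, wQ_isPath h⟩

/-! ### supply edge classification -/

lemma gk_edge_cases {e : Sym2 (Fin k ⊕ Fin k)} (he : e ∈ (Gk k).edgeSet) :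
    (∃ m : ℕ, m < k ∧ e = s(A m, B m)) ∨ (∃ m : ℕ, m + 1 < k ∧ e = s(A m, A (m+1))) := by
  rw [Gk, SimpleGraph.edgeSet_fromEdgeSet] at he
  rcases he.1 with ⟨i, hi⟩ | ⟨i, j, hij, hij2⟩
  · left
    exact ⟨(i : ℕ), i.isLt, by rw [hi]; congr <;> simp [A, B, Fin.cast_val_eq_self]⟩
  · right
    refine ⟨(i : ℕ), by omega, ?_⟩
    rw [hij2, Sym2.eq_iff]
    left
    constructor
    · simp [A, Fin.cast_val_eq_self]
    · simp only [A, Sum.inl.injEq]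
      rw [Fin.ext_iff, Fin.val_cast_of_lt (show (i:ℕ)+1 < k by omega)]
      omega

/-- the chosen representative for index `i` -/
noncomputable def PB (hk3 : 3 ≤ k) (i : ℕ) : FlowPath (Gk k) (Hk k) :=
  if h : i + 1 < k then PBB i h else PQ (by omega)

noncomputable def chosen (hk3 : 3 ≤ k) : Finset (FlowPath (Gk k) (Hk k)) :=
  ((Finset.range (k-1)).image (PB hk3)) ∪ {PQ (by omega)}

lemma exists_good_flow (hk3 : 3 ≤ k) : ∃ f : FlowPath (Gk k) (Hk k) → ℝ,
    MultiflowFeasible (Gk k) (Hk k) (fun _ => 1) f ∧ IsHalfIntegerFlow f ∧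
      (k : ℝ)/2 = multiflowValue f := by
  classical
  set C := chosen hk3 with hC
  refine ⟨fun P => if P ∈ C then (1/2 : ℝ) else 0, ⟨?_, ?_⟩, ?_, ?_⟩
  · intro P; dsimp only; split <;> norm_num
  · -- capacity
    intro e he
    have hset : {P : FlowPath (Gk k) (Hk k) | e ∈ P.edges}
        = ↑(Finset.univ.filter fun P : FlowPath (Gk k) (Hk k) => e ∈ P.edges) := by
      ext P; simp
    rw [hset, finsum_mem_coe_finset, Finset.sum_ite_mem]
    -- bound via a two-element superset
    have key : ∀ pair : Finset (FlowPath (Gk k) (Hk k)), pair.card ≤ 2 →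
        (Finset.univ.filter fun P : FlowPath (Gk k) (Hk k) => e ∈ P.edges) ∩ C ⊆ pair →
        (∑ _P ∈ (Finset.univ.filter fun P : FlowPath (Gk k) (Hk k) => e ∈ P.edges) ∩ C,
          (1/2 : ℝ)) ≤ 1 := by
      intro pair hcard hsub
      calc (∑ _P ∈ (Finset.univ.filter fun P : FlowPath (Gk k) (Hk k) => e ∈ P.edges) ∩ C,
          (1/2 : ℝ))
          = ((Finset.univ.filter fun P : FlowPath (Gk k) (Hk k) => e ∈ P.edges) ∩ C).card
            * (1/2 : ℝ) := by rw [Finset.sum_const, nsmul_eq_mul]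
        _ ≤ 2 * (1/2 : ℝ) := by
            have := (Finset.card_le_card hsub).trans hcard
            have h2 : (((Finset.univ.filter fun P : FlowPath (Gk k) (Hk k) => e ∈ P.edges)
                ∩ C).card : ℝ) ≤ 2 := by exact_mod_cast this
            nlinarith
        _ = 1 := by norm_num
    -- analyse which chosen paths can use e
    have hmemC : ∀ P ∈ C, (P = PQ (show 2 < k by omega)) ∨
        ∃ (i : ℕ) (h : i + 1 < k), P = PBB i h := by
      intro P hP
      rw [hC, chosen, Finset.mem_union, Finset.mem_image] at hP
      rcases hP with ⟨i, hi, hPB⟩ | hP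
      · right
        rw [Finset.mem_range] at hi
        have h : i + 1 < k := by omega
        refine ⟨i, h, ?_⟩
        rw [← hPB, PB, dif_pos h]
      · left; rwa [Finset.mem_singleton] at hP
    rcases gk_edge_cases he with ⟨m, hm, rfl⟩ | ⟨m, hm, rfl⟩
    · -- pendant edge
      refine key {PB hk3 m, if m = 0 then PQ (by omega) else PB hk3 (m-1)}
        ((Finset.card_insert_le _ _).trans (by simp)) ?_
      intro P hP
      rw [Finset.mem_inter, Finset.mem_filter] at hP
      obtain ⟨⟨-, hePe⟩, hPC⟩ := hP
      have heP : s(A m, B m) ∈ P.walk.edges := hePe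
      rcases hmemC P hPC with rfl | ⟨i, hi, rfl⟩
      · -- P = PQ
        change s(A m, B m) ∈ (wQ (show 2 < k by omega)).edges at heP
        rw [wQ_edges] at heP
        simp only [List.mem_cons, List.not_mem_nil, or_false] at heP
        rcases heP with h1 | h1 | h1
        · have : m = 0 := by
            rw [show (s(B 0, A 0) : Sym2 (Fin k ⊕ Fin k)) = s(A 0, B 0) from Sym2.eq_swap] at h1
            exact (AB_eq_AB hm (by omega)).mp h1
          subst this
          simp only [Finset.mem_insert, Finset.mem_singleton, if_pos rfl]
          right; rfl
        · exact absurd h1 AB_ne_AA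
        · exact absurd h1 AB_ne_AA
      · -- P = PBB i
        change s(A m, B m) ∈ (wBB i hi).edges at heP
        rw [wBB_edges] at heP
        simp only [List.mem_cons, List.not_mem_nil, or_false] at heP
        rcases heP with h1 | h1 | h1
        · have : m = i := by
            rw [show (s(B i, A i) : Sym2 (Fin k ⊕ Fin k)) = s(A i, B i) from Sym2.eq_swap] at h1
            exact (AB_eq_AB hm (by omega)).mp h1
          subst this
          simp only [Finset.mem_insert]
          left
          rw [PB, dif_pos hi]
        · exact absurd h1 AB_ne_AA
        · have : m = i + 1 := (AB_eq_AB hm hi).mp h1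
          subst this
          simp only [Finset.mem_insert, Finset.mem_singleton]
          right
          rw [if_neg (by omega), Nat.add_sub_cancel, PB, dif_pos hi]
    · -- spine edge
      refine key {PB hk3 m, PQ (by omega)}
        ((Finset.card_insert_le _ _).trans (by simp)) ?_
      intro P hP
      rw [Finset.mem_inter, Finset.mem_filter] at hP
      obtain ⟨⟨-, hePe⟩, hPC⟩ := hP
      have heP : s(A m, A (m+1)) ∈ P.walk.edges := hePe
      rcases hmemC P hPC with rfl | ⟨i, hi, rfl⟩
      · simp only [Finset.mem_insert, Finset.mem_singleton]; right; trivial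
      · change s(A m, A (m+1)) ∈ (wBB i hi).edges at heP
        rw [wBB_edges] at heP
        simp only [List.mem_cons, List.not_mem_nil, or_false] at heP
        rcases heP with h1 | h1 | h1
        · exact absurd (Sym2.eq_swap.trans h1.symm) AB_ne_AA
        · have : m = i := (AA_eq_AA hm hi).mp h1
          subst this
          simp only [Finset.mem_insert]
          left
          rw [PB, dif_pos hi]
        · exact absurd h1.symm AB_ne_AA
  · intro P
    dsimp only
    split
    · exact ⟨1, by norm_num⟩
    · exact ⟨0, by norm_num⟩
  · -- value
    rw [multiflowValue, finsum_eq_sum_of_fintype, Finset.sum_ite_mem, Finset.univ_inter,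
      Finset.sum_const, nsmul_eq_mul]
    have hcard : C.card = k := by
      rw [hC, chosen, Finset.card_union_of_disjoint, Finset.card_image_of_injOn,
        Finset.card_singleton, Finset.card_range]
      · omega
      · intro i hi j hj hij
        rw [Finset.mem_coe, Finset.mem_range] at hi hj
        have hi' : i + 1 < k := by omega
        have hj' : j + 1 < k := by omega
        rw [PB, PB, dif_pos hi', dif_pos hj'] at hij
        have := congrArg FlowPath.src hij
        simp only [PBB] at this
        exact (B_eq_B (by omega) (by omega)).mp this
      · rw [Finset.disjoint_singleton_right, Finset.mem_image]
        rintro ⟨i, hi, hPB⟩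
        rw [Finset.mem_range] at hi
        have hi' : i + 1 < k := by omega
        rw [PB, dif_pos hi'] at hPB
        have := congrArg FlowPath.dst hPB
        simp only [PBB, PQ] at this
        exact B_ne_A (i+1) 2 this
    rw [hcard]
    ring

/-! ### upper bound -/

lemma B_mod_eq {i j : ℕ} : (B i : Fin k ⊕ Fin k) = B j ↔ i % k = j % k := by
  simp [B, Fin.ext_iff, Fin.val_natCast]

-- equality of canonical demand edges, using only the first components
lemma bbE_eq_bbE {i i' : ℕ} (hi : i + 1 < k) (hi' : i' + 1 < k) :
    (bbE i : Sym2 (Fin k ⊕ Fin k)) = bbE i' → i = i' := by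
  rw [bbE, bbE, Sym2.eq_iff]
  rintro (⟨h1, h2⟩ | ⟨h1, h2⟩)
  · rw [B_eq_B (by omega) (by omega)] at h1; omega
  · rw [B_eq_B (by omega) (by omega)] at h1
    rw [B_eq_B (by omega) (by omega)] at h2
    omega

lemma baE_eq_baE {i i' : ℕ} (hi : i < k) (hi' : i' < k) :
    (baE i : Sym2 (Fin k ⊕ Fin k)) = baE i' → i = i' := by
  rw [baE, baE, Sym2.eq_iff]
  rintro (⟨h1, _⟩ | ⟨h1, _⟩)
  · rw [B_eq_B (by omega) (by omega)] at h1; omega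
  · exact absurd h1 (B_ne_A i (i'+2))

lemma bbE_ne_baE {i i' : ℕ} : (bbE i : Sym2 (Fin k ⊕ Fin k)) ≠ baE i' := by
  rw [bbE, baE, Ne, Sym2.eq_iff]
  rintro (⟨_, h2⟩ | ⟨h1, _⟩)
  · exact (B_ne_A (i+1) (i'+2)) h2
  · exact (B_ne_A i (i'+2)) h1

lemma flow_le (hk3 : 3 ≤ k) (f : FlowPath (Gk k) (Hk k) → ℝ)
    (hfeas : MultiflowFeasible (Gk k) (Hk k) (fun _ => 1) f)
    (hhalf : IsHalfIntegerFlow f) : multiflowValue f ≤ (k : ℝ)/2 := by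
  classical
  -- capacity in finset form
  have cap : ∀ e ∈ (Gk k).edgeSet,
      (∑ P ∈ Finset.univ.filter (fun P : FlowPath (Gk k) (Hk k) => e ∈ P.walk.edges), f P) ≤ 1 := by
    intro e he
    have h2 := hfeas.2 e he
    have hset : {P : FlowPath (Gk k) (Hk k) | e ∈ P.edges} =
        ↑(Finset.univ.filter fun P : FlowPath (Gk k) (Hk k) => e ∈ P.walk.edges) := by
      ext P; simp [FlowPath.edges]
    rw [hset, finsum_mem_coe_finset] at h2
    simpa using h2
  have hnn : ∀ s : Finset (FlowPath (Gk k) (Hk k)), 0 ≤ ∑ P ∈ s, f P :=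
    fun s => Finset.sum_nonneg fun P _ => hfeas.1 P
  have hhalfsum : ∀ s : Finset (FlowPath (Gk k) (Hk k)), ∃ n : ℤ, (∑ P ∈ s, f P) = n/2 := by
    intro s
    choose n hn using hhalf
    refine ⟨∑ P ∈ s, n P, ?_⟩
    rw [Int.cast_sum, Finset.sum_div]
    exact Finset.sum_congr rfl fun P _ => hn P
  -- the class sums
  set tB : ℕ → ℝ := fun i => ∑ P ∈ Finset.univ.filter (fun P : FlowPath (Gk k) (Hk k) => P.demandEdge = bbE i), f P
    with htB
  set tA : ℕ → ℝ := fun i => ∑ P ∈ Finset.univ.filter (fun P : FlowPath (Gk k) (Hk k) => P.demandEdge = baE i), f P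
    with htA
  set T : ℕ → ℝ := fun i => if i + 1 < k then tB i + tA i else 0 with hT
  -- basic nonnegativity
  have htBnn : ∀ i, 0 ≤ tB i := fun i => hnn _
  have htAnn : ∀ i, 0 ≤ tA i := fun i => hnn _
  -- emptiness of the `ba` class at `k-2`
  have htAzero : ∀ i, i + 1 < k → ¬ (i + 2 < k) → tA i = 0 := by
    intro i hi1 hi2
    have hempty : (Finset.univ.filter fun P : FlowPath (Gk k) (Hk k) => P.demandEdge = baE i) = ∅ := by
      rw [Finset.filter_eq_empty_iff]
      intro P _
      rcases demand_cases P with ⟨i', hi', hd⟩ | ⟨i', hi', hd⟩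
      · rw [hd]; exact bbE_ne_baE
      · rw [hd]
        intro hc
        have := baE_eq_baE (show i' < k by omega) (show i < k by omega) hc
        omega
    simp only [htA, hempty, Finset.sum_empty]
  -- shorthand classes
  set SB : ℕ → Finset (FlowPath (Gk k) (Hk k)) :=
    fun i => Finset.univ.filter (fun P => P.demandEdge = bbE i) with hSB
  set SA : ℕ → Finset (FlowPath (Gk k) (Hk k)) :=
    fun i => Finset.univ.filter (fun P => P.demandEdge = baE i) with hSA
  have htBeq : ∀ i, tB i = ∑ P ∈ SB i, f P := fun i => rfl
  have htAeq : ∀ i, tA i = ∑ P ∈ SA i, f P := fun i => rfl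
  have hSB_mem : ∀ i (P : FlowPath (Gk k) (Hk k)), P ∈ SB i ↔ P.demandEdge = bbE i := by
    intro i P; simp [hSB]
  have hSA_mem : ∀ i (P : FlowPath (Gk k) (Hk k)), P ∈ SA i ↔ P.demandEdge = baE i := by
    intro i P; simp [hSA]
  have hSAempty : ∀ i, i + 1 < k → ¬ (i + 2 < k) → SA i = ∅ := by
    intro i hi1 hi2
    rw [Finset.eq_empty_iff_forall_notMem]
    intro P hP
    rw [hSA_mem] at hP
    rcases demand_cases P with ⟨i', hi', hd⟩ | ⟨i', hi', hd⟩
    · exact bbE_ne_baE (hd.symm.trans hP)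
    · have := baE_eq_baE (show i' < k by omega) (show i < k by omega) (hd.symm.trans hP)
      omega
  -- capacity via subset
  have hcap2 : ∀ (s : Finset (FlowPath (Gk k) (Hk k))) (e : Sym2 (Fin k ⊕ Fin k)),
      e ∈ (Gk k).edgeSet → (∀ P ∈ s, e ∈ P.walk.edges) → (∑ P ∈ s, f P) ≤ 1 := by
    intro s e he hsub
    refine le_trans (Finset.sum_le_sum_of_subset_of_nonneg ?_ ?_) (cap e he)
    · intro P hP; rw [Finset.mem_filter]; exact ⟨Finset.mem_univ P, hsub P hP⟩
    · intro P _ _; exact hfeas.1 P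
  -- disjointness of classes
  have hdisj : ∀ p q : Sym2 (Fin k ⊕ Fin k), p ≠ q →
      Disjoint (Finset.univ.filter fun P : FlowPath (Gk k) (Hk k) => P.demandEdge = p)
        (Finset.univ.filter fun P : FlowPath (Gk k) (Hk k) => P.demandEdge = q) := by
    intro p q hpq
    refine Finset.disjoint_left.mpr ?_
    intro P h1 h2
    rw [Finset.mem_filter] at h1 h2
    exact hpq (h1.2.symm.trans h2.2)
  have hdisjBA : ∀ i j : ℕ, Disjoint (SB i) (SA j) := by
    intro i j; rw [hSB, hSA]; exact hdisj _ _ bbE_ne_baE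
  -- spine-i bound : T i ≤ 1 pieces
  have hspine : ∀ i, i + 1 < k → (∑ P ∈ SB i, f P) + (∑ P ∈ SA i, f P) ≤ 1 := by
    intro i hi
    rw [← Finset.sum_union (hdisjBA i i)]
    refine hcap2 _ (s(A i, A (i+1))) ((Gk k).mem_edgeSet.mpr (gk_adj_aa i hi)) ?_
    intro P hP
    rw [Finset.mem_union, hSB_mem, hSA_mem] at hP
    rcases hP with hP | hP
    · exact (mem_of_bbE hi hP).2.2
    · by_cases hi2 : i + 2 < k
      · exact (mem_of_baE hi2 hP).2.1
      · exact absurd ((hSA_mem i P).mpr hP) (by rw [hSAempty i hi hi2]; exact Finset.notMem_empty P)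
  -- pendant-(i+1) bound
  have hpend : ∀ i, i + 2 < k →
      (∑ P ∈ SB i, f P) + ((∑ P ∈ SB (i+1), f P) + (∑ P ∈ SA (i+1), f P)) ≤ 1 := by
    intro i hi
    have hd1 : Disjoint (SB i) (SB (i+1) ∪ SA (i+1)) := by
      rw [Finset.disjoint_union_right]
      constructor
      · rw [hSB]; refine hdisj _ _ ?_
        intro hc; have := bbE_eq_bbE (by omega) (by omega) hc; omega
      · exact hdisjBA i (i+1)
    rw [← Finset.sum_union (hdisjBA (i+1) (i+1)), ← Finset.sum_union hd1]
    refine hcap2 _ (s(A (i+1), B (i+1)))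
      ((Gk k).mem_edgeSet.mpr (gk_adj_ab (i+1) (by omega))) ?_
    intro P hP
    rw [Finset.mem_union, Finset.mem_union, hSB_mem, hSB_mem, hSA_mem] at hP
    rcases hP with hP | hP | hP
    · exact (mem_of_bbE (by omega) hP).2.1
    · exact (mem_of_bbE hi hP).1
    · by_cases hi3 : i + 3 < k
      · exact (mem_of_baE (by omega) hP).1
      · exact absurd ((hSA_mem (i+1) P).mpr hP)
          (by rw [hSAempty (i+1) (by omega) (by omega)]; exact Finset.notMem_empty P)
  -- spine-(i+1) bound
  have hspine2 : ∀ i, i + 2 < k →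
      (∑ P ∈ SA i, f P) + ((∑ P ∈ SB (i+1), f P) + (∑ P ∈ SA (i+1), f P)) ≤ 1 := by
    intro i hi
    have hd1 : Disjoint (SA i) (SB (i+1) ∪ SA (i+1)) := by
      rw [Finset.disjoint_union_right]
      constructor
      · rw [hSA, hSB]; refine hdisj _ _ ?_
        intro hc; exact bbE_ne_baE hc.symm
      · rw [hSA]; refine hdisj _ _ ?_
        intro hc; have := baE_eq_baE (by omega) (by omega) hc; omega
    rw [← Finset.sum_union (hdisjBA (i+1) (i+1)), ← Finset.sum_union hd1]
    refine hcap2 _ (s(A (i+1), A (i+2)))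
      ((Gk k).mem_edgeSet.mpr (gk_adj_aa (i+1) (by omega))) ?_
    intro P hP
    rw [Finset.mem_union, Finset.mem_union, hSA_mem, hSB_mem, hSA_mem] at hP
    rcases hP with hP | hP | hP
    · exact (mem_of_baE hi hP).2.2
    · exact (mem_of_bbE hi hP).2.2
    · by_cases hi3 : i + 3 < k
      · exact (mem_of_baE (by omega) hP).2.1
      · exact absurd ((hSA_mem (i+1) P).mpr hP)
          (by rw [hSAempty (i+1) (by omega) (by omega)]; exact Finset.notMem_empty P)
  -- trichotomy hypothesis of `arith`
  have hTtri : ∀ i, T i = 0 ∨ T i = 1/2 ∨ T i = 1 := by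
    intro i
    by_cases hi : i + 1 < k
    · have hTi : T i = tB i + tA i := by simp only [hT, if_pos hi]
      have hle : tB i + tA i ≤ 1 := by rw [htBeq, htAeq]; exact hspine i hi
      have hge : 0 ≤ tB i + tA i := add_nonneg (htBnn i) (htAnn i)
      obtain ⟨n1, hn1⟩ := hhalfsum (SB i)
      obtain ⟨n2, hn2⟩ := hhalfsum (SA i)
      have hsum : tB i + tA i = ((n1 + n2 : ℤ) : ℝ)/2 := by
        rw [htBeq, htAeq, hn1, hn2]; push_cast; ring
      have h0 : (0 : ℤ) ≤ n1 + n2 := by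
        have hx : (0:ℝ) ≤ ((n1+n2:ℤ):ℝ)/2 := hsum ▸ hge
        have hy : (0:ℝ) ≤ ((n1+n2:ℤ):ℝ) := by linarith
        exact_mod_cast hy
      have h2 : (n1 + n2 : ℤ) ≤ 2 := by
        have hx : ((n1+n2:ℤ):ℝ)/2 ≤ 1 := hsum ▸ hle
        have hy : ((n1+n2:ℤ):ℝ) ≤ 2 := by linarith
        exact_mod_cast hy
      have hcase : n1 + n2 = 0 ∨ n1 + n2 = 1 ∨ n1 + n2 = 2 := by omega
      rcases hcase with h | h | h
      · left; rw [hTi, hsum, h]; norm_num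
      · right; left; rw [hTi, hsum, h]; norm_num
      · right; right; rw [hTi, hsum, h]; norm_num
    · left; simp only [hT, if_neg hi]
  -- implication hypothesis of `arith`
  have hTimp : ∀ i, T (i+1) = 1 → T i = 0 := by
    intro i h1
    by_cases hi2 : i + 2 < k
    · have hT1 : T (i+1) = tB (i+1) + tA (i+1) := by simp only [hT, if_pos hi2]
      rw [hT1] at h1
      have hB0 : tB i = 0 := by
        have := hpend i hi2
        rw [← htBeq, ← htBeq, ← htAeq, h1] at this
        have hnn' := htBnn i
        linarith
      have hA0 : tA i = 0 := by
        have := hspine2 i hi2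
        rw [← htAeq, ← htBeq, ← htAeq, h1] at this
        have hnn' := htAnn i
        linarith
      simp only [hT, if_pos (show i + 1 < k by omega), hB0, hA0, add_zero]
    · exfalso
      have : T (i+1) = 0 := by simp only [hT, if_neg (show ¬ (i+1+1 < k) by omega)]
      rw [this] at h1
      norm_num at h1
  -- the value decomposes along the classes
  have hvalue : multiflowValue f = ∑ i ∈ Finset.range (k-1), T i := by
    rw [multiflowValue, finsum_eq_sum_of_fintype]
    have hmaps : ∀ P ∈ (Finset.univ : Finset (FlowPath (Gk k) (Hk k))),
        dec P.demandEdge ∈ Finset.range (k-1) := by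
      intro P _
      rw [Finset.mem_range]
      rcases demand_cases P with ⟨i', hi', hd⟩ | ⟨i', hi', hd⟩
      · rw [hd, dec_bbE hi']; omega
      · rw [hd, dec_baE hi']; omega
    rw [← Finset.sum_fiberwise_of_maps_to hmaps f]
    refine Finset.sum_congr rfl ?_
    intro i hi
    rw [Finset.mem_range] at hi
    have hik : i + 1 < k := by omega
    have hfib : Finset.univ.filter
        (fun P : FlowPath (Gk k) (Hk k) => dec P.demandEdge = i) = SB i ∪ SA i := by
      ext P
      rw [Finset.mem_filter, Finset.mem_union, hSB_mem, hSA_mem]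
      simp only [Finset.mem_univ, true_and]
      constructor
      · intro hdec
        rcases demand_cases P with ⟨i', hi', hd⟩ | ⟨i', hi', hd⟩
        · left; rw [hd, dec_bbE hi'] at hdec; rw [hd, hdec]
        · right; rw [hd, dec_baE hi'] at hdec; rw [hd, hdec]
      · rintro (hd | hd)
        · rw [hd, dec_bbE hik]
        · rcases demand_cases P with ⟨i', hi', hd'⟩ | ⟨i', hi', hd'⟩
          · exact absurd (hd'.symm.trans hd) bbE_ne_baE
          · have hii : i' = i := baE_eq_baE (by omega) (by omega) (hd'.symm.trans hd)
            rw [hd', dec_baE hi', hii]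
    rw [hfib, Finset.sum_union (hdisjBA i i)]
    simp only [hT, if_pos hik]
    rfl
  -- conclude
  have harith := (arith T hTtri hTimp (k-2)).1
  rw [hvalue, show k - 1 = (k-2)+1 by omega]
  refine le_trans harith ?_
  rw [Nat.cast_sub (by omega : 2 ≤ k)]
  norm_num

end St17

theorem max_half_integer_multiflow_Gk (k : ℕ) (hk : 3 ≤ k) :
    IsGreatest {x : ℝ | ∃ f : FlowPath (Gk k) (Hk k) → ℝ,
        MultiflowFeasible (Gk k) (Hk k) (fun _ => 1) f ∧ IsHalfIntegerFlow f ∧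
          x = multiflowValue f}
      ((k : ℝ) / 2) := by
  haveI : NeZero k := ⟨by omega⟩
  constructor
  · obtain ⟨f, hfeas, hhalf, hval⟩ := St17.exists_good_flow (k := k) hk
    exact ⟨f, hfeas, hhalf, hval⟩
  · rintro x ⟨f, hfeas, hhalf, rfl⟩
    exact St17.flow_le hk f hfeas hhalf
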